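/- Let N ≥ 2 and ω = exp(2πi/N). For integers 0 ≤ n < N, the q-Pochhammer symbols satisfy (ω; ω)_n · (ω̄; ω̄)_{N-1-n} = N, where (q;q)_k = ∏_{j=1}^{k}(1 - q^j) and ω̄ is the complex conjugate of ω. -/

import Mathlib

open Complex Finset

/-- With `ω = exp(2πi/N)` and `ω̄` its complex conjugate, for `0 ≤ n < N` one has
`(ω;ω)_n (ω̄;ω̄)_{N-1-n} = N`, where `(q;q)_k = ∏_{j=1}^{k} (1 - q^j)`. -/
theorem stmt_3 (N : ℕ) (hN : 2 ≤ N) (n : ℕ) (hn : n < N)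
    (ω ωb : ℂ) (hω : ω = Complex.exp (2 * Real.pi * I / N))
    (hωb : ωb = starRingEnd ℂ ω) :
    (∏ j ∈ Finset.range n, (1 - ω ^ (j + 1))) *
      (∏ j ∈ Finset.range (N - 1 - n), (1 - ωb ^ (j + 1))) = (N : ℂ) := by
  have hprim : IsPrimitiveRoot ω N := by
    rw [hω]; exact Complex.isPrimitiveRoot_exp N (by omega)
  have habs : ‖ω‖ = 1 := by
    rw [hω, Complex.norm_exp]
    have : (2 * (Real.pi : ℂ) * I / N).re = 0 := by
      simp [Complex.div_re]
    simp [this]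
  have hωN : ω ^ N = 1 := hprim.pow_eq_one
  have hb : ωb = ω⁻¹ := by
    rw [hωb, Complex.inv_def, Complex.normSq_eq_norm_sq, habs]; simp
  -- rewrite second product
  have hbpow : ∀ j, j + 1 ≤ N → ωb ^ (j + 1) = ω ^ (N - (j + 1)) := by
    intro j hj
    have key : ω ^ (j + 1) * ω ^ (N - (j + 1)) = 1 := by
      rw [← pow_add, show j + 1 + (N - (j + 1)) = N by omega, hωN]
    rw [hb, inv_pow]
    exact inv_eq_of_mul_eq_one_left (by rw [mul_comm] at key; exact key)
  set m := N - 1 - n with hm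
  have hsecond : ∏ j ∈ Finset.range m, (1 - ωb ^ (j + 1))
      = ∏ j ∈ Finset.range m, (1 - ω ^ (n + 1 + j)) := by
    rw [← Finset.prod_range_reflect (fun j => (1 - ω ^ (n + 1 + j))) m]
    apply Finset.prod_congr rfl
    intro j hj
    rw [Finset.mem_range] at hj
    rw [hbpow j (by omega)]
    congr 2
    omega
  rw [hsecond]
  have hadd := Finset.prod_range_add (fun j => (1 - ω ^ (j + 1))) n m
  have hnm : n + m = N - 1 := by omega
  have : (∏ j ∈ Finset.range n, (1 - ω ^ (j + 1))) *
      ∏ j ∈ Finset.range m, (1 - ω ^ (n + 1 + j))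
      = ∏ j ∈ Finset.range (N - 1), (1 - ω ^ (j + 1)) := by
    rw [← hnm, hadd]
    congr 1
    apply Finset.prod_congr rfl
    intro j _
    congr 2
    omega
  rw [this]
  obtain ⟨M, hM⟩ : ∃ M, N = M + 1 := ⟨N - 1, by omega⟩
  subst hM
  have := IsPrimitiveRoot.prod_one_sub_pow_eq_order (n := M) (μ := ω) hprim
  simpa using this
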